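/- arXiv:1503.08514 — 2 statements merged into one kernel-verified Lean document; each statement's English description precedes it below -/
import Mathlib

section
/- Let A > 0, B > 0, (ρ_i), (τ_j) strictly increasing unbounded real sequences with ρ_0 = τ_0 = 0, and assume the pair is nondegenerate, i.e., it is not the case that both ρ_{i*} = A and τ_{j*} = B. Then the set S = { s > 0 : σ_{i,j}(s) = 0 for some i, j ≥ 0 with i + j > 0 } is countable and has no accumulation point in (0, ∞); its only accumulation points are 0 and +∞. -/
/-- The set of singular instants is countable, with no accumulation point in
`(0, ∞)`; its only possible (finite) accumulation point is `0`. -/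
theorem singular_instants_countable_discrete
    (A B : ℝ) (hA : 0 < A) (hB : 0 < B)
    (ρ τ : ℕ → ℝ) (hρ : StrictMono ρ) (hρ0 : ρ 0 = 0) (hρub : ∀ C : ℝ, ∃ i, C < ρ i)
    (hτ : StrictMono τ) (hτ0 : τ 0 = 0) (hτub : ∀ C : ℝ, ∃ j, C < τ j)
    (istar jstar : ℕ)
    (histar : A ≤ ρ istar ∧ ∀ i < istar, ρ i < A)
    (hjstar : B ≤ τ jstar ∧ ∀ j < jstar, τ j < B)
    (hnondeg : ¬(ρ istar = A ∧ τ jstar = B)) :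
    Set.Countable {s : ℝ | 0 < s ∧ ∃ i j : ℕ, 0 < i + j ∧ (ρ i - A) + (τ j - B) / s = 0} ∧
    (∀ x : ℝ,
        AccPt x (Filter.principal
          {s : ℝ | 0 < s ∧ ∃ i j : ℕ, 0 < i + j ∧ (ρ i - A) + (τ j - B) / s = 0}) →
        x = 0) := by
  set S : Set ℝ :=
    {s : ℝ | 0 < s ∧ ∃ i j : ℕ, 0 < i + j ∧ (ρ i - A) + (τ j - B) / s = 0} with hS
  -- only istar can achieve A, only jstar can achieve B
  have hiA : ∀ i, ρ i = A → i = istar := by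
    intro i h
    rcases lt_trichotomy i istar with h1 | h1 | h1
    · exact absurd h (ne_of_lt (histar.2 i h1))
    · exact h1
    · have := hρ h1
      linarith [histar.1]
  have hjB : ∀ j, τ j = B → j = jstar := by
    intro j h
    rcases lt_trichotomy j jstar with h1 | h1 | h1
    · exact absurd h (ne_of_lt (hjstar.2 j h1))
    · exact h1
    · have := hτ h1
      linarith [hjstar.1]
  have key : ∀ i j, ¬(ρ i = A ∧ τ j = B) := by
    intro i j ⟨h1, h2⟩
    exact hnondeg ⟨(hiA i h1) ▸ h1, (hjB j h2) ▸ h2⟩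
  -- linear form of the equation
  have heq : ∀ (i j : ℕ) (s : ℝ), 0 < s → ((ρ i - A) + (τ j - B) / s = 0 ↔
      (ρ i - A) * s + (τ j - B) = 0) := by
    intro i j s hs
    constructor
    · intro h
      have h2 : ((ρ i - A) + (τ j - B) / s) * s = 0 := by rw [h]; ring
      rw [add_mul, div_mul_cancel₀ _ (ne_of_gt hs)] at h2
      exact h2
    · intro h
      have h2 : ((ρ i - A) * s + (τ j - B)) / s = 0 := by rw [h]; simp
      rw [add_div, mul_div_cancel_right₀ _ (ne_of_gt hs)] at h2
      exact h2
  have hne : ∀ (i j : ℕ) (s : ℝ), 0 < s → (ρ i - A) * s + (τ j - B) = 0 → ρ i ≠ A := by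
    intro i j s hs h hcon
    apply key i j
    refine ⟨hcon, ?_⟩
    rw [hcon] at h
    have : τ j - B = 0 := by linarith
    linarith
  -- countability
  have hcnt : S.Countable := by
    have hsub : S ⊆ ⋃ p : ℕ × ℕ,
        {s : ℝ | 0 < s ∧ (ρ p.1 - A) * s + (τ p.2 - B) = 0} := by
      rintro s ⟨hs, i, j, _, h⟩
      exact Set.mem_iUnion.2 ⟨(i, j), hs, (heq i j s hs).1 h⟩
    refine Set.Countable.mono hsub (Set.countable_iUnion fun p => ?_)
    apply Set.Subsingleton.countable
    rintro s ⟨hs, h1⟩ t ⟨ht, h2⟩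
    have hne' := hne p.1 p.2 s hs h1
    have : (ρ p.1 - A) * (s - t) = 0 := by ring_nf; linarith
    rcases mul_eq_zero.1 this with h | h
    · exact absurd (by linarith : ρ p.1 = A) hne'
    · linarith
  refine ⟨hcnt, ?_⟩
  -- finiteness of S on compact intervals away from 0
  have hfinIdx : ∀ (f : ℕ → ℝ), StrictMono f → (∀ C : ℝ, ∃ i, C < f i) →
      ∀ C : ℝ, {i : ℕ | f i ≤ C}.Finite := by
    intro f hf hub C
    obtain ⟨n, hn⟩ := hub C
    apply Set.Finite.subset (Set.finite_Iio n)
    intro i hi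
    simp only [Set.mem_setOf_eq] at hi
    simp only [Set.mem_Iio]
    by_contra h
    push_neg at h
    have : f n ≤ f i := hf.monotone h
    linarith
  have hfin : ∀ a b : ℝ, 0 < a → (S ∩ Set.Icc a b).Finite := by
    intro a b ha
    have hI : {i : ℕ | ρ i ≤ A + B / a}.Finite := hfinIdx ρ hρ hρub _
    have hJ : {j : ℕ | τ j ≤ B + b * A}.Finite := hfinIdx τ hτ hτub _
    apply Set.Finite.subset (((hI.prod hJ).image (fun p : ℕ × ℕ => (B - τ p.2) / (ρ p.1 - A))))
    rintro s ⟨⟨hs, i, j, _, h⟩, hsa, hsb⟩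
    have h' := (heq i j s hs).1 h
    have hne' := hne i j s hs h'
    have hρ0i : 0 ≤ ρ i := hρ0 ▸ hρ.monotone (Nat.zero_le i)
    have hτ0j : 0 ≤ τ j := hτ0 ▸ hτ.monotone (Nat.zero_le j)
    refine ⟨(i, j), ⟨?_, ?_⟩, ?_⟩
    · -- ρ i ≤ A + B / a
      simp only [Set.mem_setOf_eq]
      rcases le_or_gt (ρ i) A with h1 | h1
      · have : 0 < B / a := div_pos hB ha
        linarith
      · rw [← sub_le_iff_le_add', le_div_iff₀ ha]
        nlinarith
    · -- τ j ≤ B + b * A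
      simp only [Set.mem_setOf_eq]
      rcases le_or_gt (ρ i) A with h1 | h1
      · nlinarith
      · nlinarith
    · -- s = (B - τ j) / (ρ i - A)
      have hd : ρ i - A ≠ 0 := fun hc => hne' (by linarith)
      field_simp
      linarith
  -- accumulation points
  intro x hx
  by_contra hx0
  rw [accPt_iff_nhds] at hx
  -- x is in the closure of S, hence x ≥ 0
  have hxcl : x ∈ closure S := by
    rw [mem_closure_iff_nhds]
    intro U hU
    obtain ⟨y, hy, _⟩ := hx U hU
    exact ⟨y, hy⟩
  have hx0' : 0 ≤ x := by
    have : closure S ⊆ Set.Ici (0 : ℝ) := by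
      apply closure_minimal _ isClosed_Ici
      rintro s ⟨hs, _⟩
      exact le_of_lt hs
    exact this hxcl
  have hxpos : 0 < x := lt_of_le_of_ne hx0' (Ne.symm hx0)
  -- finite set near x
  have hF : (S ∩ Set.Icc (x / 2) (x + 1)).Finite := hfin _ _ (by linarith)
  set F := S ∩ Set.Icc (x / 2) (x + 1) with hFdef
  have hFc : IsClosed (F \ {x}) := (hF.diff (t := {x})).isClosed
  have hV : (Set.Ioo (x / 2) (x + 1) ∩ (F \ {x})ᶜ) ∈ nhds x := by
    apply Filter.inter_mem
    · exact Ioo_mem_nhds (by linarith) (by linarith)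
    · apply hFc.isOpen_compl.mem_nhds
      simp [Set.mem_diff]
  obtain ⟨y, ⟨⟨hy1, hy2⟩, hyS⟩, hyx⟩ := hx _ hV
  apply hy2
  exact ⟨⟨hyS, le_of_lt hy1.1, le_of_lt hy1.2⟩, hyx⟩
end

section
/- Suppose the eigenvalues of a family of self-adjoint operators J_s on (0, ∞) are exactly σ_{i,j}(s) = (ρ_i − A) + (τ_j − B)/s for i + j > 0, with A, B > 0, (ρ_i), (τ_j) strictly increasing unbounded starting at 0, and the pair nondegenerate. Then there exists s₀ > 0 such that for all 0 < s < s₀, 0 is not of the form σ_{i,j}(s) unless s lies in the strictly decreasing sequence (s_n^{(1)}) of zeros accumulating at 0; moreover between consecutive terms of this sequence no σ_{i,j} vanishes. -/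
/-- Near `0`, the singular instants of `J_s` form exactly a strictly decreasing
sequence tending to `0`, and between consecutive terms no eigenvalue function
`σ_{i,j}` vanishes. -/
theorem singular_instants_near_zero_sequence
    (A B : ℝ) (hA : 0 < A) (hB : 0 < B)
    (ρ τ : ℕ → ℝ) (hρ : StrictMono ρ) (hρ0 : ρ 0 = 0) (hρub : ∀ C : ℝ, ∃ i, C < ρ i)
    (hτ : StrictMono τ) (hτ0 : τ 0 = 0) (hτub : ∀ C : ℝ, ∃ j, C < τ j)
    (istar jstar : ℕ)
    (histar : A ≤ ρ istar ∧ ∀ i < istar, ρ i < A)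
    (hjstar : B ≤ τ jstar ∧ ∀ j < jstar, τ j < B)
    (hnondeg : ¬(ρ istar = A ∧ τ jstar = B)) :
    ∃ s₀ : ℝ, 0 < s₀ ∧ ∃ seq : ℕ → ℝ, StrictAnti seq ∧
      (∀ n : ℕ, 0 < seq n ∧ seq n < s₀) ∧
      Filter.Tendsto seq Filter.atTop (nhds 0) ∧
      ∀ s : ℝ, 0 < s → s < s₀ →
        ((∃ i j : ℕ, 0 < i + j ∧ (ρ i - A) + (τ j - B) / s = 0) ↔ ∃ n : ℕ, s = seq n) := by
  have hτnonneg : ∀ j, 0 ≤ τ j := fun j => hτ0 ▸ hτ.monotone (Nat.zero_le j)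
  have hρnonneg : ∀ i, 0 ≤ ρ i := fun i => hρ0 ▸ hρ.monotone (Nat.zero_le i)
  -- least j with B < τ j
  have hex : ∃ j, B < τ j := hτub B
  set j₂ := Nat.find hex with hj₂def
  have hj₂ : B < τ j₂ := Nat.find_spec hex
  have hj₂min : ∀ j, B < τ j → j₂ ≤ j := fun j h => Nat.find_le h
  set s₀ : ℝ := (τ j₂ - B) / A with hs₀def
  have hs₀ : 0 < s₀ := div_pos (by linarith) hA
  -- the set of "type 1" zeros
  set T : Set ℝ := {s : ℝ | s < s₀ ∧ ∃ i j : ℕ,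
      A < ρ i ∧ τ j < B ∧ s = (B - τ j) / (ρ i - A)} with hTdef
  have hTpos : ∀ s ∈ T, 0 < s := by
    rintro s ⟨-, i, j, hi, hj, rfl⟩
    exact div_pos (by linarith) (by linarith)
  -- characterization of zeros in (0, s₀)
  have char : ∀ s : ℝ, 0 < s → s < s₀ →
      ((∃ i j : ℕ, 0 < i + j ∧ (ρ i - A) + (τ j - B) / s = 0) ↔ s ∈ T) := by
    intro s hs hss₀
    constructor
    · rintro ⟨i, j, -, heq⟩
      have key : (ρ i - A) * s = B - τ j := by
        field_simp at heq; linarith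
      rcases lt_trichotomy (ρ i) A with hlt | heqA | hgt
      · -- ρ i < A : forces τ j > B and s ≥ s₀, contradiction
        have hτB : B < τ j := by nlinarith
        have hj2j : j₂ ≤ j := hj₂min j hτB
        have hτj : τ j₂ ≤ τ j := hτ.monotone hj2j
        have hs₀A : s₀ * A = τ j₂ - B := div_mul_cancel₀ _ (ne_of_gt hA)
        have hρi : 0 ≤ ρ i := hρnonneg i
        nlinarith [mul_lt_mul_of_pos_right hss₀ hA]
      · -- ρ i = A : forces τ j = B, contradicting nondegeneracy
        have hτj : τ j = B := by nlinarith
        have hii : i = istar := by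
          rcases lt_trichotomy i istar with h | h | h
          · exact absurd heqA (ne_of_lt (histar.2 i h))
          · exact h
          · exact absurd (heqA ▸ hρ h) (not_lt.mpr histar.1)
        have hjj : j = jstar := by
          rcases lt_trichotomy j jstar with h | h | h
          · exact absurd hτj (ne_of_lt (hjstar.2 j h))
          · exact h
          · exact absurd (hτj ▸ hτ h) (not_lt.mpr hjstar.1)
        exact absurd ⟨hii ▸ heqA, hjj ▸ hτj⟩ hnondeg
      · -- ρ i > A : type 1 zero
        have hτB : τ j < B := by nlinarith
        refine ⟨hss₀, i, j, hgt, hτB, ?_⟩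
        rw [eq_div_iff (by linarith : ρ i - A ≠ 0)]
        linarith [key]
    · rintro ⟨hss, i, j, hi, hj, rfl⟩
      have hden : (0:ℝ) < ρ i - A := by linarith
      have hi0 : 0 < i := by
        rcases Nat.eq_zero_or_pos i with h | h
        · rw [h, hρ0] at hi; linarith
        · exact h
      refine ⟨i, j, by omega, ?_⟩
      have hsne : (B - τ j) / (ρ i - A) ≠ 0 :=
        ne_of_gt (div_pos (by linarith) hden)
      have hBτ : B - τ j ≠ 0 := ne_of_gt (show (0:ℝ) < B - τ j by linarith)
      field_simp
      ring
  -- finiteness above any positive level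
  have hfin : ∀ ε : ℝ, 0 < ε → (T ∩ Set.Ici ε).Finite := by
    intro ε hε
    obtain ⟨I, hI⟩ := hρub (A + B / ε)
    have hsub : T ∩ Set.Ici ε ⊆
        (fun p : ℕ × ℕ => (B - τ p.2) / (ρ p.1 - A)) '' (Set.Iio I ×ˢ Set.Iio jstar) := by
      rintro s ⟨⟨-, i, j, hi, hj, rfl⟩, hsε⟩
      have hden : (0:ℝ) < ρ i - A := by linarith
      have hiI : i < I := by
        by_contra h
        push_neg at h
        have h1 : A + B / ε < ρ i := lt_of_lt_of_le hI (hρ.monotone h)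
        have h2 : ε * (ρ i - A) ≤ B - τ j := by
          rw [Set.mem_Ici] at hsε
          calc ε * (ρ i - A) ≤ ((B - τ j) / (ρ i - A)) * (ρ i - A) :=
                mul_le_mul_of_nonneg_right hsε (le_of_lt hden)
            _ = B - τ j := div_mul_cancel₀ _ (ne_of_gt hden)
        have h3 : B - τ j ≤ B := by linarith [hτnonneg j]
        have h4 : B / ε < ρ i - A := by linarith
        have h5 : B < ε * (ρ i - A) := by
          have := (div_lt_iff₀ hε).mp h4
          linarith
        linarith
      have hjJ : j < jstar := by
        by_contra h
        push_neg at h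
        exact absurd hj (not_lt.mpr (le_trans hjstar.1 (hτ.monotone h)))
      exact ⟨(i, j), ⟨hiI, hjJ⟩, rfl⟩
    exact Set.Finite.subset (((Set.finite_Iio I).prod (Set.finite_Iio jstar)).image _) hsub
  -- density of T near 0
  have hdense : ∀ t : ℝ, 0 < t → ∃ s ∈ T, s < t := by
    intro t ht
    set t' := min t s₀ with ht'def
    have ht' : 0 < t' := lt_min ht hs₀
    obtain ⟨i, hi⟩ := hρub (A + B / t')
    have hBt' : 0 < B / t' := div_pos hB ht'
    have hiA : A < ρ i := by linarith
    have hden : (0:ℝ) < ρ i - A := by linarith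
    have hst' : B / (ρ i - A) < t' := by
      rw [div_lt_iff₀ hden]
      have : B / t' < ρ i - A := by linarith
      have := (div_lt_iff₀ ht').mp this
      linarith
    refine ⟨B / (ρ i - A), ⟨lt_of_lt_of_le hst' (min_le_right _ _), i, 0, hiA, by
      rw [hτ0]; exact hB, by rw [hτ0]; ring_nf⟩, lt_of_lt_of_le hst' (min_le_left _ _)⟩
  -- existence of maxima below any positive level
  have hmax : ∀ t : ℝ, 0 < t → ∃ m, m ∈ T ∧ m < t ∧ ∀ x ∈ T, x < t → x ≤ m := by
    intro t ht
    obtain ⟨e, heT, het⟩ := hdense t ht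
    have hepos : 0 < e := hTpos e heT
    have hUfin : ((T ∩ Set.Ici e) ∩ Set.Iio t).Finite :=
      (hfin e hepos).subset (Set.inter_subset_left)
    have hUne : ((T ∩ Set.Ici e) ∩ Set.Iio t).Nonempty := ⟨e, ⟨heT, le_refl e⟩, het⟩
    obtain ⟨m, hmU, hmmax⟩ := Set.Finite.exists_maximalFor id _ hUfin hUne
    refine ⟨m, hmU.1.1, hmU.2, ?_⟩
    intro x hxT hxt
    rcases le_or_gt x e with h | h
    · exact le_trans h hmU.1.2
    · by_contra hc
      push_neg at hc
      exact absurd (hmmax ⟨⟨hxT, le_of_lt h⟩, hxt⟩ (le_of_lt hc)) (not_le.mpr hc)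
  -- the "next" function
  set nextFun : ℝ → ℝ := fun t => if h : 0 < t then (hmax t h).choose else 0 with hnextdef
  have nextT : ∀ t : ℝ, (h : 0 < t) → nextFun t ∈ T ∧ nextFun t < t ∧
      ∀ x ∈ T, x < t → x ≤ nextFun t := by
    intro t h
    simp only [hnextdef, dif_pos h]
    exact (hmax t h).choose_spec
  set seq : ℕ → ℝ := fun n => nextFun^[n + 1] s₀ with hseqdef
  have hseq0 : seq 0 = nextFun s₀ := by simp [hseqdef]
  have hseqsucc : ∀ n, seq (n + 1) = nextFun (seq n) := by
    intro n
    simp only [hseqdef]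
    rw [Function.iterate_succ_apply']
  have hseqT : ∀ n, seq n ∈ T := by
    intro n
    induction n with
    | zero => rw [hseq0]; exact (nextT s₀ hs₀).1
    | succ n ih =>
      rw [hseqsucc]
      exact (nextT (seq n) (hTpos _ ih)).1
  have hseqpos : ∀ n, 0 < seq n := fun n => hTpos _ (hseqT n)
  have hanti : StrictAnti seq := by
    apply strictAnti_nat_of_succ_lt
    intro n
    rw [hseqsucc]
    exact (nextT (seq n) (hseqpos n)).2.1
  have hseqlt : ∀ n, seq n < s₀ := fun n => (hseqT n).1
  have htend : Filter.Tendsto seq Filter.atTop (nhds 0) := by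
    rw [Metric.tendsto_atTop]
    intro ε hε
    have hExN : ∃ N, seq N < ε := by
      by_contra hcon
      push_neg at hcon
      have hsub : Set.range seq ⊆ T ∩ Set.Ici ε := by
        rintro x ⟨n, rfl⟩
        exact ⟨hseqT n, hcon n⟩
      exact (hfin ε hε).not_infinite
        ((Set.infinite_range_of_injective hanti.injective).mono hsub)
    obtain ⟨N, hN⟩ := hExN
    refine ⟨N, fun n hn => ?_⟩
    rw [Real.dist_eq, sub_zero, abs_of_pos (hseqpos n)]
    exact lt_of_le_of_lt (hanti.antitone hn) hN
  have hcover : ∀ s ∈ T, ∃ n, s = seq n := by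
    intro s hs
    have hspos : 0 < s := hTpos s hs
    have hexn : ∃ n, seq n < s :=
      (htend.eventually (Iio_mem_nhds hspos)).exists
    have hn := Nat.find_spec hexn
    rcases hfind : Nat.find hexn with _ | m
    · rw [hfind, hseq0] at hn
      exact absurd ((nextT s₀ hs₀).2.2 s hs hs.1) (not_le.mpr hn)
    · rw [hfind, hseqsucc] at hn
      have hm : ¬ seq m < s := Nat.find_min hexn (by omega)
      push_neg at hm
      rcases eq_or_lt_of_le hm with h | h
      · exact ⟨m, h⟩
      · exact absurd ((nextT (seq m) (hseqpos m)).2.2 s hs h) (not_le.mpr hn)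
  refine ⟨s₀, hs₀, seq, hanti, fun n => ⟨hseqpos n, hseqlt n⟩, htend, ?_⟩
  intro s hs hss₀
  rw [char s hs hss₀]
  constructor
  · exact fun h => hcover s h
  · rintro ⟨n, rfl⟩
    exact hseqT n
end
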